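/- Suppose the OGTP instance ⟨𝒮, ℱ⟩ has a solution grid of size m × m, and let M be the finite structure over Σ̄ obtained from G_m by assigning to each Σ₀-labeled edge (both the green and the red copy of each grid edge) the shade of the corresponding edge of the solution grid. Then M ⊨ 𝒬↔, M ⊨ (G(Q₀))(a,b), and M ⊭ (R(Q₀))(a,b); in particular all requests generated by 𝒬_good are already satisfied in M, and 𝒬 does not finitely determine Q₀. -/
import Mathlib


/-- A graph database (structure) over vertex type `V` and edge-label alphabet `γ`:
`D x c y` means that there is an edge from `x` to `y` labeled with `c`. -/
def DB (V γ : Type) : Type := V → γ → V → Prop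

/-- `pathSat D x w y` : the structure `D` satisfies `w(x,y)`, i.e. there is a directed
path from `x` to `y` whose consecutive edge labels spell the word `w`. -/
def pathSat {V γ : Type} (D : DB V γ) : V → List γ → V → Prop
  | x, [], y => x = y
  | x, c :: w, y => ∃ z, D x c z ∧ pathSat D z w y

/-- `D ⊨ L(x,y)` for a language `L` : some word of `L` labels a path from `x` to `y`. -/
def langSat {V γ : Type} (D : DB V γ) (L : Language γ) (x y : V) : Prop :=
  ∃ w ∈ L, pathSat D x w y

/-- The answer `L(D)` of the path query given by the language `L` on the database `D`. -/
def qry {V γ : Type} (L : Language γ) (D : DB V γ) : Set (V × V) :=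
  { p | langSat D L p.1 p.2 }

/-- All edge labels of `D` lie in the set `A`. -/
def labelsIn {V γ : Type} (D : DB V γ) (A : Set γ) : Prop :=
  ∀ x c y, D x c y → c ∈ A

/-- A language is regular iff it is the language of some regular expression. -/
def IsRegularLang {γ : Type} (L : Language γ) : Prop :=
  ∃ r : RegularExpression γ, r.matches' = L

/-- `Qs` determines `Q0` : any two structures (over a common domain) on which all the
queries of `Qs` agree also agree on `Q0`. -/
def Determines {γ : Type} (Qs : Set (Language γ)) (Q0 : Language γ) : Prop :=
  ∀ (V : Type) (D₁ D₂ : DB V γ),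
    (∀ L ∈ Qs, qry L D₁ = qry L D₂) → qry Q0 D₁ = qry Q0 D₂

/-- `Qs` determines `Q0` over structures whose labels come from the alphabet `A`. -/
def DeterminesOn {γ : Type} (A : Set γ) (Qs : Set (Language γ)) (Q0 : Language γ) : Prop :=
  ∀ (V : Type) (D₁ D₂ : DB V γ), labelsIn D₁ A → labelsIn D₂ A →
    (∀ L ∈ Qs, qry L D₁ = qry L D₂) → qry Q0 D₁ = qry Q0 D₂

/-- Finite determinacy : the same notion with `D₁`, `D₂` ranging over finite structures. -/
def FinDeterminesOn {γ : Type} (A : Set γ) (Qs : Set (Language γ)) (Q0 : Language γ) : Prop :=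
  ∀ (V : Type), Finite V → ∀ (D₁ D₂ : DB V γ), labelsIn D₁ A → labelsIn D₂ A →
    (∀ L ∈ Qs, qry L D₁ = qry L D₂) → qry Q0 D₁ = qry Q0 D₂

/-! ### Red-green signature.  A letter of `Σ̄` is a pair `(color, a)` with
`color = true` meaning green and `color = false` meaning red. -/

/-- The green copy `G(w)` of a word `w`. -/
def greenW {γ : Type} (w : List γ) : List (Bool × γ) := w.map (fun c => (true, c))

/-- The red copy `R(w)` of a word `w`. -/
def redW {γ : Type} (w : List γ) : List (Bool × γ) := w.map (fun c => (false, c))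

/-- The green copy `G(L)` of a language `L`. -/
def greenL {γ : Type} (L : Language γ) : Language (Bool × γ) := greenW '' L

/-- The red copy `R(L)` of a language `L`. -/
def redL {γ : Type} (L : Language γ) : Language (Bool × γ) := redW '' L

/-- A constraint `L → L'` given by a pair of languages,
meaning `∀ x y, L(x,y) ⇒ L'(x,y)`. -/
structure RCon (γ : Type) where
  lhs : Language γ
  rhs : Language γ

/-- `D ⊨ t` for a single constraint `t`. -/
def satRC {V γ : Type} (D : DB V γ) (t : RCon γ) : Prop :=
  ∀ x y, langSat D t.lhs x y → langSat D t.rhs x y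

/-- `D ⊨ T` for a set `T` of constraints. -/
def satRCs {V γ : Type} (D : DB V γ) (T : Set (RCon γ)) : Prop :=
  ∀ t ∈ T, satRC D t

/-- `L→`, the regular constraint `G(L) → R(L)`. -/
def rcFwd {γ : Type} (L : Language γ) : RCon (Bool × γ) := ⟨greenL L, redL L⟩

/-- `L←`, the regular constraint `R(L) → G(L)`. -/
def rcBwd {γ : Type} (L : Language γ) : RCon (Bool × γ) := ⟨redL L, greenL L⟩

/-- `𝒬↔ = ⋃_{L ∈ 𝒬} {L→, L←}`. -/
def biRC {γ : Type} (Qs : Set (Language γ)) : Set (RCon (Bool × γ)) :=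
  rcFwd '' Qs ∪ rcBwd '' Qs

/-- A request is a triple `⟨x, y, t⟩`. -/
abbrev Req (V γ : Type) := V × V × RCon γ

/-- `rq T D` : the set of requests `⟨x,y,L→L'⟩` with `L → L' ∈ T`, `D ⊨ L(x,y)`
and `D ⊭ L'(x,y)`. -/
def rq {V γ : Type} (T : Set (RCon γ)) (D : DB V γ) : Set (Req V γ) :=
  { r | r.2.2 ∈ T ∧ langSat D r.2.2.lhs r.1 r.2.1 ∧ ¬ langSat D r.2.2.rhs r.1 r.2.1 }

/-- A vertex of (i.e. active in) the structure `D`. -/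
def activeV {V γ : Type} (D : DB V γ) (v : V) : Prop :=
  ∃ c u, D v c u ∨ D u c v

/-- The edge set of a chain whose consecutive vertices are listed in the first argument
and whose edge labels spell the second argument.  -/
def chainOf {V γ : Type} : List V → List γ → DB V γ
  | u :: v :: vs, c :: w => fun p d q => (p = u ∧ d = c ∧ q = v) ∨ chainOf (v :: vs) w p d q
  | _, _ => fun _ _ _ => False

/-- `D` is (exactly) the chain structure `w[x,y]` : its edges form a chain from `x` to `y`
labeled `w`, whose internal vertices are pairwise distinct and distinct from `x, y`. -/
def IsChainStruct {V γ : Type} (D : DB V γ) (x : V) (w : List γ) (y : V) : Prop :=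
  ∃ vs : List V, vs.length + 1 = w.length ∧ (x :: vs ++ [y]).Nodup ∧
    ∀ p c q, D p c q ↔ chainOf (x :: vs ++ [y]) w p c q

/-- `Step T D D'` : `D'` is obtained from `D` by simultaneously satisfying every request of
`rq T D` : for each request `⟨x,y,t⟩` a word `w` of the right-hand side of `t` is chosen and a
fresh path `w[x,y]` is added, the internal vertices of all the added paths being new
(not vertices of `D`) and pairwise distinct. -/
def Step {V γ : Type} (T : Set (RCon γ)) (D D' : DB V γ) : Prop :=
  ∃ (wch : Req V γ → List γ) (vch : Req V γ → List V),
    (∀ r ∈ rq T D,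
      wch r ∈ (r.2.2).rhs ∧ (vch r).length + 1 = (wch r).length ∧ (vch r).Nodup ∧
      ∀ v ∈ vch r, ¬ activeV D v ∧ v ≠ r.1 ∧ v ≠ r.2.1) ∧
    (∀ r ∈ rq T D, ∀ r' ∈ rq T D, r ≠ r' → ∀ v ∈ vch r, v ∉ vch r') ∧
    ∀ p c q, D' p c q ↔
      (D p c q ∨ ∃ r ∈ rq T D, chainOf (r.1 :: vch r ++ [r.2.1]) (wch r) p c q)

/-- `H ∈ Ω(T, D₀)` : `H` is a final position, namely the union of a play
`D₀, D₁, D₂, …` with `Step T Dᵢ Dᵢ₊₁` for all `i`. -/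
def FinalPos {V γ : Type} (T : Set (RCon γ)) (D₀ H : DB V γ) : Prop :=
  ∃ seq : ℕ → DB V γ, seq 0 = D₀ ∧ (∀ i, Step T (seq i) (seq (i + 1))) ∧
    ∀ p c q, H p c q ↔ ∃ i, seq i p c q

/-- `h` is a homomorphism from `D` to `M`. -/
def IsHom {V W γ : Type} (D : DB V γ) (M : DB W γ) (h : V → W) : Prop :=
  ∀ x c y, D x c y → M (h x) c (h y)

/-! ### Our Grid Tiling Problem.
Shades are natural numbers, `black := 0`.  Directions are booleans:
`false` = Horizontal `H`, `true` = Vertical `V`. -/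

/-- A solution of the OGTP instance `⟨S, F⟩` : a square grid of some size `m ≥ 1` (with
vertices `(i,j)`, `0 ≤ i,j ≤ m`, horizontal edges `(i,j) → (i+1,j)` and vertical edges
`(i,j) → (i,j+1)`), whose horizontal (resp. vertical) edges are labeled, via `hl` (resp.
`vl`), with shades from `S`, whose bottom-left vertical edge and upper-right horizontal
edge are black, and which contains no directed path of length 2 whose pair of labels is
a forbidden pair from `F`. -/
def GridSol (S : Finset ℕ) (F : Finset ((Bool × ℕ) × (Bool × ℕ))) : Prop :=
  ∃ m : ℕ, 1 ≤ m ∧ ∃ hl vl : ℕ → ℕ → ℕ,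
    (∀ i j, i < m → j ≤ m → hl i j ∈ S) ∧
    (∀ i j, i ≤ m → j < m → vl i j ∈ S) ∧
    vl 0 0 = 0 ∧
    hl (m - 1) m = 0 ∧
    (∀ i j, i + 1 < m → j ≤ m → ((false, hl i j), (false, hl (i + 1) j)) ∉ F) ∧
    (∀ i j, i < m → j < m → ((false, hl i j), (true, vl (i + 1) j)) ∉ F) ∧
    (∀ i j, i < m → j < m → ((true, vl i j), (false, hl i (j + 1))) ∉ F) ∧
    (∀ i j, i ≤ m → j + 1 < m → ((true, vl i j), (true, vl i (j + 1))) ∉ F)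

/-- Well-formedness of the set of forbidden pairs : all its shades belong to `S`. -/
def FWf (S : Finset ℕ) (F : Finset ((Bool × ℕ) × (Bool × ℕ))) : Prop :=
  ∀ p ∈ F, p.1.2 ∈ S ∧ p.2.2 ∈ S

/-! ### The alphabet of the reduction.
`Σ = {α, β, ω} ∪ Σ₀` with `Σ₀ = {A,B} × {H,V} × {W,C} × 𝒮`.
Conventions: in `Sig.base ab dir temp shade`,
`ab = true` means `A` and `ab = false` means `B`;
`dir = false` means `H` (horizontal) and `dir = true` means `V` (vertical);
`temp = true` means `W` (warm) and `temp = false` means `C` (cold);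
shades are natural numbers, `black := 0`. -/
inductive Sig : Type where
  | alpha : Sig
  | beta : Sig
  | omega : Sig
  | base : Bool → Bool → Bool → ℕ → Sig
deriving DecidableEq

/-- `c` is a letter of `Σ₀` (its shade belonging to `S`). -/
def inSigma0 (S : Finset ℕ) : Sig → Prop
  | .base _ _ _ s => s ∈ S
  | _ => False

/-- `c` is a letter of `Σ₀` with the indicated first three components
(its shade ranging over `S`). -/
def isL (S : Finset ℕ) (ab dir temp : Bool) (c : Sig) : Prop :=
  ∃ s ∈ S, c = Sig.base ab dir temp s

/-- All letters of the word `u` belong to `Σ₀`. -/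
def allS0 (S : Finset ℕ) (u : List Sig) : Prop := ∀ c ∈ u, inSigma0 S c

/-- `Q¹ = ω`. -/
def Qg1 : Language Sig := {[Sig.omega]}

/-- `Q² = α + β`. -/
def Qg2 : Language Sig := {[Sig.alpha], [Sig.beta]}

/-- `[B H W][A V W]`, the first summand of `Q³`. -/
def Qg3a (S : Finset ℕ) : Language Sig :=
  { w | ∃ c1 c2, w = [c1, c2] ∧ isL S false false true c1 ∧ isL S true true true c2 }

/-- `[B V C][A H C]`, the second summand of `Q³`. -/
def Qg3b (S : Finset ℕ) : Language Sig :=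
  { w | ∃ c1 c2, w = [c1, c2] ∧ isL S false true false c1 ∧ isL S true false false c2 }

/-- `[A H C][B V C]`, the first summand of `Q⁴`. -/
def Qg4a (S : Finset ℕ) : Language Sig :=
  { w | ∃ c1 c2, w = [c1, c2] ∧ isL S true false false c1 ∧ isL S false true false c2 }

/-- `[A V W][B H W]`, the second summand of `Q⁴`. -/
def Qg4b (S : Finset ℕ) : Language Sig :=
  { w | ∃ c1 c2, w = [c1, c2] ∧ isL S true true true c1 ∧ isL S false false true c2 }

/-- `[B V C]`, the first summand of `Q⁵`. -/
def Qg5a (S : Finset ℕ) : Language Sig := { w | ∃ c, w = [c] ∧ isL S false true false c }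

/-- `[B V W]`, the second summand of `Q⁵`. -/
def Qg5b (S : Finset ℕ) : Language Sig := { w | ∃ c, w = [c] ∧ isL S false true true c }

/-- `[B H W]`, the first summand of `Q⁶`. -/
def Qg6a (S : Finset ℕ) : Language Sig := { w | ∃ c, w = [c] ∧ isL S false false true c }

/-- `[B H C]`, the second summand of `Q⁶`. -/
def Qg6b (S : Finset ℕ) : Language Sig := { w | ∃ c, w = [c] ∧ isL S false false false c }

/-- `[A V W]`, the first summand of `Q⁷`. -/
def Qg7a (S : Finset ℕ) : Language Sig := { w | ∃ c, w = [c] ∧ isL S true true true c }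

/-- `[A V C]`, the second summand of `Q⁷`. -/
def Qg7b (S : Finset ℕ) : Language Sig := { w | ∃ c, w = [c] ∧ isL S true true false c }

/-- `[A H C]`, the first summand of `Q⁸`. -/
def Qg8a (S : Finset ℕ) : Language Sig := { w | ∃ c, w = [c] ∧ isL S true false false c }

/-- `[A H W]`, the second summand of `Q⁸`. -/
def Qg8b (S : Finset ℕ) : Language Sig := { w | ∃ c, w = [c] ∧ isL S true false true c }

/-- `𝒬_good`, the set of 8 good languages. -/
def Qgood (S : Finset ℕ) : Set (Language Sig) :=
  {Qg1, Qg2, Qg3a S + Qg3b S, Qg4a S + Qg4b S, Qg5a S + Qg5b S,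
   Qg6a S + Qg6b S, Qg7a S + Qg7b S, Qg8a S + Qg8b S}

/-- `β (Σ_{s ∈ 𝒮∖{black}} [A V W s]) Σ₀* ω`. -/
def Qbad1 (S : Finset ℕ) : Language Sig :=
  { w | ∃ s u, s ∈ S ∧ s ≠ 0 ∧ allS0 S u ∧
      w = Sig.beta :: Sig.base true true true s :: (u ++ [Sig.omega]) }

/-- `β Σ₀* (Σ_{s ∈ 𝒮∖{black}} [B H W s]) ω`. -/
def Qbad2 (S : Finset ℕ) : Language Sig :=
  { w | ∃ s u, s ∈ S ∧ s ≠ 0 ∧ allS0 S u ∧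
      w = Sig.beta :: (u ++ [Sig.base false false true s, Sig.omega]) }

/-- `β Σ₀* [• d W s][• d' W s'] Σ₀* ω`, for a forbidden pair `⟨(d,s),(d',s')⟩`. -/
def QbadF (S : Finset ℕ) (d : Bool) (s : ℕ) (d' : Bool) (s' : ℕ) : Language Sig :=
  { w | ∃ u u', ∃ b b' : Bool, allS0 S u ∧ allS0 S u' ∧
      w = Sig.beta :: (u ++ Sig.base b d true s :: Sig.base b' d' true s' :: (u' ++ [Sig.omega])) }

/-- `𝒬_bad`. -/
def Qbad (S : Finset ℕ) (F : Finset ((Bool × ℕ) × (Bool × ℕ))) : Set (Language Sig) :=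
  {Qbad1 S, Qbad2 S} ∪ { L | ∃ p ∈ F, L = QbadF S p.1.1 p.1.2 p.2.1 p.2.2 }

/-- `α Σ₀* [• • W] Σ₀* ω`. -/
def Qugly1 (S : Finset ℕ) : Language Sig :=
  { w | ∃ u c u', allS0 S u ∧ allS0 S u' ∧ inSigma0 S c ∧
      (∃ ab d s, c = Sig.base ab d true s) ∧
      w = Sig.alpha :: (u ++ c :: (u' ++ [Sig.omega])) }

/-- `β Σ₀* [• • C] Σ₀* ω`. -/
def Qugly2 (S : Finset ℕ) : Language Sig :=
  { w | ∃ u c u', allS0 S u ∧ allS0 S u' ∧ inSigma0 S c ∧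
      (∃ ab d s, c = Sig.base ab d false s) ∧
      w = Sig.beta :: (u ++ c :: (u' ++ [Sig.omega])) }

/-- `𝒬_ugly`. -/
def Qugly (S : Finset ℕ) : Set (Language Sig) := {Qugly1 S, Qugly2 S}

/-- `𝒬 = 𝒬_good ∪ 𝒬_bad ∪ 𝒬_ugly`. -/
def QQ (S : Finset ℕ) (F : Finset ((Bool × ℕ) × (Bool × ℕ))) : Set (Language Sig) :=
  Qgood S ∪ Qbad S F ∪ Qugly S

/-- `[A H C][B V C]`, the repeated block of `Q_start`. -/
def startBlock (S : Finset ℕ) : Language Sig :=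
  { w | ∃ c1 c2, w = [c1, c2] ∧ isL S true false false c1 ∧ isL S false true false c2 }

/-- `Q_start = α ([A H C][B V C])⁺ ω`. -/
def Qstart (S : Finset ℕ) : Language Sig :=
  { w | ∃ u, u ∈ KStar.kstar (startBlock S) ∧ u ≠ [] ∧ w = Sig.alpha :: (u ++ [Sig.omega]) }

/-- The sum of the languages `QbadF` over all forbidden pairs of `F`. -/
def QbadFSum (S : Finset ℕ) (F : Finset ((Bool × ℕ) × (Bool × ℕ))) : Language Sig :=
  { w | ∃ p ∈ F, w ∈ QbadF S p.1.1 p.1.2 p.2.1 p.2.2 }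

/-- `Q₀ = Q_start + Σ_{L ∈ 𝒬_bad ∪ 𝒬_ugly} L`. -/
def Q0L (S : Finset ℕ) (F : Finset ((Bool × ℕ) × (Bool × ℕ))) : Language Sig :=
  Qstart S + Qbad1 S + Qbad2 S + QbadFSum S F + Qugly1 S + Qugly2 S

/-- The alphabet `Σ = {α, β, ω} ∪ Σ₀` of the reduction, as a set of letters. -/
def SigAlph (S : Finset ℕ) : Set Sig :=
  {Sig.alpha, Sig.beta, Sig.omega} ∪ { c | inSigma0 S c }

/-- The vertices of the grid structure `G_m` : `a`, `b` and `v i j`. -/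
inductive GV : Type where
  | a : GV
  | b : GV
  | v : ℕ → ℕ → GV
deriving DecidableEq

/-- The `{A,B}`-component of the edges leaving `v i j` :
`A` (= `true`) if `i + j` is even, `B` (= `false`) if `i + j` is odd. -/
def abOf (i j : ℕ) : Bool := (i + j) % 2 = 0

/-- The structure `M` over `Σ̄` : the grid `G_m` with the shades of a solution grid
(given by `hl` for horizontal and `vl` for vertical edges) assigned to the `Σ₀`-labeled
edges.  Colors: `true` = green, `false` = red; every green `Σ₀`-edge is Cold and every
red `Σ₀`-edge is Warm. -/
def Mstruct (m : ℕ) (hl vl : ℕ → ℕ → ℕ) : DB GV (Bool × Sig) := fun p c q =>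
  (p = GV.a ∧ q = GV.v 0 0 ∧ (c = (true, Sig.alpha) ∨ c = (false, Sig.beta))) ∨
  (p = GV.v m m ∧ q = GV.b ∧ (c = (true, Sig.omega) ∨ c = (false, Sig.omega))) ∨
  (∃ i j, i < m ∧ j ≤ m ∧ p = GV.v i j ∧ q = GV.v (i + 1) j ∧
    (c = (true, Sig.base (abOf i j) false false (hl i j)) ∨
     c = (false, Sig.base (abOf i j) false true (hl i j)))) ∨
  (∃ i j, i ≤ m ∧ j < m ∧ p = GV.v i j ∧ q = GV.v i (j + 1) ∧
    (c = (true, Sig.base (abOf i j) true false (vl i j)) ∨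
     c = (false, Sig.base (abOf i j) true true (vl i j))))


/-! ### Auxiliary development -/

section Aux

open Sig

/-- General: pathSat of an append. -/
theorem pathSat_append' {V γ : Type} (D : DB V γ) (u v : List γ) (x y : V) :
    pathSat D x (u ++ v) y ↔ ∃ z, pathSat D x u z ∧ pathSat D z v y := by
  induction u generalizing x with
  | nil => simp [pathSat]
  | cons c u ih =>
    simp only [List.cons_append, pathSat, List.append_eq, ih]
    constructor
    · rintro ⟨z, hz, z', h1, h2⟩; exact ⟨z', ⟨z, hz, h1⟩, h2⟩
    · rintro ⟨z', ⟨z, hz, h1⟩, h2⟩; exact ⟨z, hz, z', h1, h2⟩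

/-- Every letter of a realized word labels some edge. -/
theorem pathSat_letter {V γ : Type} (D : DB V γ) :
    ∀ (w : List γ) (x y : V), pathSat D x w y → ∀ c ∈ w, ∃ p q, D p c q := by
  intro w
  induction w with
  | nil => intro x y _ c hc; simp at hc
  | cons d w ih =>
    rintro x y ⟨z, hz, hp⟩ c hc
    rcases List.mem_cons.1 hc with rfl | hc
    · exact ⟨x, z, hz⟩
    · exact ih z y hp c hc

/-- The one-colored structures: `Dgc … true` is the green part (as a `Sig`-structure),
`Dgc … false` the red part. -/
def Dgc (m : ℕ) (hl vl : ℕ → ℕ → ℕ) (col : Bool) : DB GV Sig :=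
  fun p c q => Mstruct m hl vl p (col, c) q

theorem pathSat_color (m : ℕ) (hl vl : ℕ → ℕ → ℕ) (col : Bool) (w : List Sig) :
    ∀ x y, pathSat (Mstruct m hl vl) x (w.map (fun c => (col, c))) y ↔
      pathSat (Dgc m hl vl col) x w y := by
  induction w with
  | nil => intro x y; rfl
  | cons c w ih =>
    intro x y
    simp only [List.map_cons, pathSat]
    constructor
    · rintro ⟨z, hz, hp⟩; exact ⟨z, hz, (ih z y).1 hp⟩
    · rintro ⟨z, hz, hp⟩; exact ⟨z, hz, (ih z y).2 hp⟩

theorem langSat_green (m : ℕ) (hl vl : ℕ → ℕ → ℕ) (L : Language Sig) (x y : GV) :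
    langSat (Mstruct m hl vl) (greenL L) x y ↔ langSat (Dgc m hl vl true) L x y := by
  constructor
  · rintro ⟨w', ⟨w, hw, rfl⟩, hp⟩
    exact ⟨w, hw, (pathSat_color m hl vl true w x y).1 hp⟩
  · rintro ⟨w, hw, hp⟩
    exact ⟨greenW w, ⟨w, hw, rfl⟩, (pathSat_color m hl vl true w x y).2 hp⟩

theorem langSat_red (m : ℕ) (hl vl : ℕ → ℕ → ℕ) (L : Language Sig) (x y : GV) :
    langSat (Mstruct m hl vl) (redL L) x y ↔ langSat (Dgc m hl vl false) L x y := by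
  constructor
  · rintro ⟨w', ⟨w, hw, rfl⟩, hp⟩
    exact ⟨w, hw, (pathSat_color m hl vl false w x y).1 hp⟩
  · rintro ⟨w, hw, hp⟩
    exact ⟨redW w, ⟨w, hw, rfl⟩, (pathSat_color m hl vl false w x y).2 hp⟩

section Grid

variable {S : Finset ℕ} {F : Finset ((Bool × ℕ) × (Bool × ℕ))} (m : ℕ) (hl vl : ℕ → ℕ → ℕ)

/-- Edge characterization: α. -/
theorem edge_alpha {col : Bool} {x y : GV} :
    Dgc m hl vl col x Sig.alpha y ↔ col = true ∧ x = GV.a ∧ y = GV.v 0 0 := by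
  cases col <;> simp [Dgc, Mstruct, Prod.ext_iff]

theorem edge_beta {col : Bool} {x y : GV} :
    Dgc m hl vl col x Sig.beta y ↔ col = false ∧ x = GV.a ∧ y = GV.v 0 0 := by
  cases col <;> simp [Dgc, Mstruct, Prod.ext_iff]

theorem edge_omega {col : Bool} {x y : GV} :
    Dgc m hl vl col x Sig.omega y ↔ x = GV.v m m ∧ y = GV.b := by
  cases col <;> simp [Dgc, Mstruct, Prod.ext_iff]

theorem edge_base {col ab d t : Bool} {s : ℕ} {x y : GV} :
    Dgc m hl vl col x (Sig.base ab d t s) y ↔ t = !col ∧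
      ((d = false ∧ ∃ i j, i < m ∧ j ≤ m ∧ ab = abOf i j ∧ s = hl i j ∧
          x = GV.v i j ∧ y = GV.v (i + 1) j) ∨
       (d = true ∧ ∃ i j, i ≤ m ∧ j < m ∧ ab = abOf i j ∧ s = vl i j ∧
          x = GV.v i j ∧ y = GV.v i (j + 1))) := by
  cases col <;> simp [Dgc, Mstruct, Prod.ext_iff] <;> aesop

theorem abOf_h (i j : ℕ) : abOf (i + 1) j = !abOf i j := by
  rcases Nat.mod_two_eq_zero_or_one (i + j) with h | h <;>
    simp [abOf, Nat.add_right_comm i 1 j, Nat.add_mod, h]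

theorem abOf_v (i j : ℕ) : abOf i (j + 1) = !abOf i j := by
  rcases Nat.mod_two_eq_zero_or_one (i + j) with h | h <;>
    simp [abOf, ← Nat.add_assoc, Nat.add_mod, h]

theorem abOf_diag (k : ℕ) : abOf k k = true := by
  simp [abOf, Nat.add_mod_right, Nat.two_mul k ▸ (Nat.mul_mod_right 2 k)]

/-- Grid positions of `ab d`-edges (regardless of temperature/shade). -/
def gridEdge (m : ℕ) (ab d : Bool) (x y : GV) : Prop :=
  (d = false ∧ ∃ i j, i < m ∧ j ≤ m ∧ ab = abOf i j ∧ x = GV.v i j ∧ y = GV.v (i + 1) j) ∨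
  (d = true ∧ ∃ i j, i ≤ m ∧ j < m ∧ ab = abOf i j ∧ x = GV.v i j ∧ y = GV.v i (j + 1))

variable (hhl : ∀ i j, i < m → j ≤ m → hl i j ∈ S)
variable (hvl : ∀ i j, i ≤ m → j < m → vl i j ∈ S)

include hhl hvl in
theorem exists_edge (col ab d : Bool) (x y : GV) :
    (∃ s ∈ S, ∃ t, Dgc m hl vl col x (Sig.base ab d t s) y) ↔ gridEdge m ab d x y := by
  constructor
  · rintro ⟨s, _, t, h⟩
    rcases (edge_base m hl vl).1 h with ⟨_, ⟨hd, i, j, h1, h2, h3, _, hx, hy⟩ |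
      ⟨hd, i, j, h1, h2, h3, _, hx, hy⟩⟩
    · exact Or.inl ⟨hd, i, j, h1, h2, h3, hx, hy⟩
    · exact Or.inr ⟨hd, i, j, h1, h2, h3, hx, hy⟩
  · rintro (⟨hd, i, j, h1, h2, h3, hx, hy⟩ | ⟨hd, i, j, h1, h2, h3, hx, hy⟩)
    · exact ⟨hl i j, hhl i j h1 h2, !col,
        (edge_base m hl vl).2 ⟨rfl, Or.inl ⟨hd, i, j, h1, h2, h3, rfl, hx, hy⟩⟩⟩
    · exact ⟨vl i j, hvl i j h1 h2, !col,
        (edge_base m hl vl).2 ⟨rfl, Or.inr ⟨hd, i, j, h1, h2, h3, rfl, hx, hy⟩⟩⟩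

/-- A single-letter language. -/
def singQ (S : Finset ℕ) (ab d t : Bool) : Language Sig :=
  { w | ∃ c, w = [c] ∧ isL S ab d t c }

include hhl hvl in
/-- Generic characterization of the single-letter good queries. -/
theorem sat_single (col ab d t₁ : Bool) (x y : GV) :
    langSat (Dgc m hl vl col) (singQ S ab d t₁ + singQ S ab d (!t₁)) x y ↔
      gridEdge m ab d x y := by
  rw [← exists_edge m hl vl hhl hvl col ab d x y]
  constructor
  · rintro ⟨w, hw, hp⟩
    rcases (Language.mem_add _ _ _).1 hw with ⟨c, rfl, s, hs, rfl⟩ | ⟨c, rfl, s, hs, rfl⟩ <;>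
    · obtain ⟨z, hz, he⟩ := hp
      have : z = y := he
      subst this
      exact ⟨s, hs, _, hz⟩
  · rintro ⟨s, hs, t, he⟩
    refine ⟨[Sig.base ab d t s], ?_, y, he, rfl⟩
    cases t <;> cases t₁
    · exact Or.inl ⟨_, rfl, s, hs, rfl⟩
    · exact Or.inr ⟨_, rfl, s, hs, rfl⟩
    · exact Or.inr ⟨_, rfl, s, hs, rfl⟩
    · exact Or.inl ⟨_, rfl, s, hs, rfl⟩

/-- Position predicate for `Q³`. -/
def stepB (m : ℕ) (x y : GV) : Prop :=
  ∃ i j, i < m ∧ j < m ∧ abOf i j = false ∧ x = GV.v i j ∧ y = GV.v (i + 1) (j + 1)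

/-- Position predicate for `Q⁴`. -/
def stepA (m : ℕ) (x y : GV) : Prop :=
  ∃ i j, i < m ∧ j < m ∧ abOf i j = true ∧ x = GV.v i j ∧ y = GV.v (i + 1) (j + 1)

include hhl hvl in
theorem sat_Q3 (col : Bool) (x y : GV) :
    langSat (Dgc m hl vl col) (Qg3a S + Qg3b S) x y ↔ stepB m x y := by
  constructor
  · rintro ⟨w, hw, hp⟩
    rcases (Language.mem_add _ _ _).1 hw with
      ⟨c1, c2, rfl, ⟨s, hs, rfl⟩, ⟨s', hs', rfl⟩⟩ | ⟨c1, c2, rfl, ⟨s, hs, rfl⟩, ⟨s', hs', rfl⟩⟩ <;>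
      obtain ⟨z, he1, z', he2, hz⟩ := hp <;>
      have hzy : z' = y := hz <;> subst hzy <;>
      rcases (edge_base m hl vl).1 he1 with ⟨ht1, h1⟩ <;>
      rcases (edge_base m hl vl).1 he2 with ⟨ht2, h2⟩
    · -- BHW then AVW (red)
      rcases h1 with ⟨_, i, j, hi, hj, hab, _, rfl, rfl⟩ | ⟨h, _⟩
      swap; · simp at h
      rcases h2 with ⟨h, _⟩ | ⟨_, i', j', hi', hj', hab', _, heq, rfl⟩
      · simp at h
      obtain ⟨h1, h2⟩ : i + 1 = i' ∧ j = j' := by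
        have := heq; simp [GV.v.injEq] at this; omega
      subst h1; subst h2
      exact ⟨i, j, hi, hj', hab.symm, rfl, rfl⟩
    · -- BVC then AHC (green)
      rcases h1 with ⟨h, _⟩ | ⟨_, i, j, hi, hj, hab, _, rfl, rfl⟩
      · simp at h
      rcases h2 with ⟨_, i', j', hi', hj', hab', _, heq, rfl⟩ | ⟨h, _⟩
      swap; · simp at h
      obtain ⟨h1, h2⟩ : i = i' ∧ j + 1 = j' := by
        have := heq; simp [GV.v.injEq] at this; omega
      subst h1; subst h2
      exact ⟨i, j, hi', hj, hab.symm, rfl, rfl⟩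
  · rintro ⟨i, j, hi, hj, hab, rfl, rfl⟩
    cases col
    · -- red : BHW AVW
      refine ⟨[Sig.base false false true (hl i j), Sig.base true true true (vl (i + 1) j)],
        Or.inl ⟨_, _, rfl, ⟨hl i j, hhl i j hi (by omega), rfl⟩,
          ⟨vl (i + 1) j, hvl (i + 1) j (by omega) hj, rfl⟩⟩,
        GV.v (i + 1) j, ?_, GV.v (i + 1) (j + 1), ?_, rfl⟩
      · exact (edge_base m hl vl).2 ⟨rfl, Or.inl ⟨rfl, i, j, hi, by omega, hab.symm, rfl, rfl, rfl⟩⟩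
      · refine (edge_base m hl vl).2 ⟨(by rfl), Or.inr ⟨rfl, i + 1, j, by omega, hj, ?_, rfl, rfl, rfl⟩⟩
        simp [abOf_h, hab]
    · -- green : BVC AHC
      refine ⟨[Sig.base false true false (vl i j), Sig.base true false false (hl i (j + 1))],
        Or.inr ⟨_, _, rfl, ⟨vl i j, hvl i j (by omega) hj, rfl⟩,
          ⟨hl i (j + 1), hhl i (j + 1) hi (by omega), rfl⟩⟩,
        GV.v i (j + 1), ?_, GV.v (i + 1) (j + 1), ?_, rfl⟩
      · exact (edge_base m hl vl).2 ⟨rfl, Or.inr ⟨rfl, i, j, by omega, hj, hab.symm, rfl, rfl, rfl⟩⟩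
      · refine (edge_base m hl vl).2 ⟨(by rfl), Or.inl ⟨rfl, i, j + 1, hi, by omega, ?_, rfl, rfl, rfl⟩⟩
        simp [abOf_v, hab]

include hhl hvl in
theorem sat_Q4 (col : Bool) (x y : GV) :
    langSat (Dgc m hl vl col) (Qg4a S + Qg4b S) x y ↔ stepA m x y := by
  constructor
  · rintro ⟨w, hw, hp⟩
    rcases (Language.mem_add _ _ _).1 hw with
      ⟨c1, c2, rfl, ⟨s, hs, rfl⟩, ⟨s', hs', rfl⟩⟩ | ⟨c1, c2, rfl, ⟨s, hs, rfl⟩, ⟨s', hs', rfl⟩⟩ <;>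
      obtain ⟨z, he1, z', he2, hz⟩ := hp <;>
      have hzy : z' = y := hz <;> subst hzy <;>
      rcases (edge_base m hl vl).1 he1 with ⟨ht1, h1⟩ <;>
      rcases (edge_base m hl vl).1 he2 with ⟨ht2, h2⟩
    · -- AHC then BVC (green)
      rcases h1 with ⟨_, i, j, hi, hj, hab, _, rfl, rfl⟩ | ⟨h, _⟩
      swap; · simp at h
      rcases h2 with ⟨h, _⟩ | ⟨_, i', j', hi', hj', hab', _, heq, rfl⟩
      · simp at h
      obtain ⟨h1, h2⟩ : i + 1 = i' ∧ j = j' := by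
        have := heq; simp [GV.v.injEq] at this; omega
      subst h1; subst h2
      exact ⟨i, j, hi, hj', hab.symm, rfl, rfl⟩
    · -- AVW then BHW (red)
      rcases h1 with ⟨h, _⟩ | ⟨_, i, j, hi, hj, hab, _, rfl, rfl⟩
      · simp at h
      rcases h2 with ⟨_, i', j', hi', hj', hab', _, heq, rfl⟩ | ⟨h, _⟩
      swap; · simp at h
      obtain ⟨h1, h2⟩ : i = i' ∧ j + 1 = j' := by
        have := heq; simp [GV.v.injEq] at this; omega
      subst h1; subst h2
      exact ⟨i, j, hi', hj, hab.symm, rfl, rfl⟩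
  · rintro ⟨i, j, hi, hj, hab, rfl, rfl⟩
    cases col
    · -- red : AVW BHW
      refine ⟨[Sig.base true true true (vl i j), Sig.base false false true (hl i (j + 1))],
        Or.inr ⟨_, _, rfl, ⟨vl i j, hvl i j (by omega) hj, rfl⟩,
          ⟨hl i (j + 1), hhl i (j + 1) hi (by omega), rfl⟩⟩,
        GV.v i (j + 1), ?_, GV.v (i + 1) (j + 1), ?_, rfl⟩
      · exact (edge_base m hl vl).2 ⟨rfl, Or.inr ⟨rfl, i, j, by omega, hj, hab.symm, rfl, rfl, rfl⟩⟩
      · refine (edge_base m hl vl).2 ⟨(by rfl), Or.inl ⟨rfl, i, j + 1, hi, by omega, ?_, rfl, rfl, rfl⟩⟩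
        simp [abOf_v, hab]
    · -- green : AHC BVC
      refine ⟨[Sig.base true false false (hl i j), Sig.base false true false (vl (i + 1) j)],
        Or.inl ⟨_, _, rfl, ⟨hl i j, hhl i j hi (by omega), rfl⟩,
          ⟨vl (i + 1) j, hvl (i + 1) j (by omega) hj, rfl⟩⟩,
        GV.v (i + 1) j, ?_, GV.v (i + 1) (j + 1), ?_, rfl⟩
      · exact (edge_base m hl vl).2 ⟨rfl, Or.inl ⟨rfl, i, j, hi, by omega, hab.symm, rfl, rfl, rfl⟩⟩
      · refine (edge_base m hl vl).2 ⟨(by rfl), Or.inr ⟨rfl, i + 1, j, by omega, hj, ?_, rfl, rfl, rfl⟩⟩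
        simp [abOf_h, hab]

theorem sat_Q1 (col : Bool) (x y : GV) :
    langSat (Dgc m hl vl col) Qg1 x y ↔ x = GV.v m m ∧ y = GV.b := by
  constructor
  · rintro ⟨w, hw, hp⟩
    have : w = [Sig.omega] := hw
    subst this
    obtain ⟨z, he, hz⟩ := hp
    have : z = y := hz
    subst this
    exact (edge_omega m hl vl).1 he
  · rintro ⟨rfl, rfl⟩
    exact ⟨[Sig.omega], rfl, GV.b, (edge_omega m hl vl).2 ⟨rfl, rfl⟩, rfl⟩

theorem sat_Q2 (col : Bool) (x y : GV) :
    langSat (Dgc m hl vl col) Qg2 x y ↔ x = GV.a ∧ y = GV.v 0 0 := by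
  constructor
  · rintro ⟨w, hw, hp⟩
    rcases hw with rfl | rfl <;>
    · obtain ⟨z, he, hz⟩ := hp
      have : z = y := hz
      subst this
      first
        | exact ((edge_alpha m hl vl).1 he).2
        | exact ((edge_beta m hl vl).1 he).2
  · rintro ⟨rfl, rfl⟩
    cases col
    · exact ⟨[Sig.beta], Or.inr rfl, GV.v 0 0, (edge_beta m hl vl).2 ⟨rfl, rfl, rfl⟩, rfl⟩
    · exact ⟨[Sig.alpha], Or.inl rfl, GV.v 0 0, (edge_alpha m hl vl).2 ⟨rfl, rfl, rfl⟩, rfl⟩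

theorem no_bad1 (hb1 : vl 0 0 = 0) (col : Bool) (x y : GV) :
    ¬ langSat (Dgc m hl vl col) (Qbad1 S) x y := by
  rintro ⟨w, ⟨s, u, hsS, hs0, hu, rfl⟩, hp⟩
  obtain ⟨z, he, hp⟩ := hp
  obtain ⟨rfl, rfl, rfl⟩ := (edge_beta m hl vl).1 he
  obtain ⟨z', he2, _⟩ := hp
  rcases (edge_base m hl vl).1 he2 with ⟨_, ⟨h, _⟩ | ⟨_, i, j, hi, hj, hab, hsv, hx, _⟩⟩
  · simp at h
  · obtain ⟨h1, h2⟩ : 0 = i ∧ 0 = j := by simpa [GV.v.injEq] using hx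
    subst h1; subst h2
    exact hs0 (hsv.trans hb1)

theorem no_bad2 (hb2 : hl (m - 1) m = 0) (col : Bool) (x y : GV) :
    ¬ langSat (Dgc m hl vl col) (Qbad2 S) x y := by
  rintro ⟨w, ⟨s, u, hsS, hs0, hu, rfl⟩, hp⟩
  obtain ⟨z, he, hp⟩ := hp
  obtain ⟨rfl, rfl, rfl⟩ := (edge_beta m hl vl).1 he
  obtain ⟨z1, _, hp2⟩ := (pathSat_append' _ u _ _ _).1 hp
  obtain ⟨z2, he1, z3, he2, _⟩ := hp2
  obtain ⟨hz2, _⟩ := (edge_omega m hl vl).1 he2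
  subst hz2
  rcases (edge_base m hl vl).1 he1 with ⟨_, ⟨_, i, j, hi, hj, hab, hsv, hx, heq⟩ | ⟨h, _⟩⟩
  · obtain ⟨h1, h2⟩ : i + 1 = m ∧ j = m := by
      have := heq; simp [GV.v.injEq] at this; omega
    apply hs0
    rw [hsv, show i = m - 1 by omega, h2, hb2]
  · simp at h

theorem no_badF (col : Bool) {d d' : Bool} {s s' : ℕ}
    (hmem : ((d, s), (d', s')) ∈ F)
    (hfHH : ∀ i j, i + 1 < m → j ≤ m → ((false, hl i j), (false, hl (i + 1) j)) ∉ F)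
    (hfHV : ∀ i j, i < m → j < m → ((false, hl i j), (true, vl (i + 1) j)) ∉ F)
    (hfVH : ∀ i j, i < m → j < m → ((true, vl i j), (false, hl i (j + 1))) ∉ F)
    (hfVV : ∀ i j, i ≤ m → j + 1 < m → ((true, vl i j), (true, vl i (j + 1))) ∉ F)
    (x y : GV) :
    ¬ langSat (Dgc m hl vl col) (QbadF S d s d' s') x y := by
  rintro ⟨w, ⟨u, u', b, b', hu, hu', rfl⟩, hp⟩
  obtain ⟨z, he, hp⟩ := hp
  obtain ⟨rfl, rfl, rfl⟩ := (edge_beta m hl vl).1 he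
  obtain ⟨z1, _, hp2⟩ := (pathSat_append' _ u _ _ _).1 hp
  obtain ⟨z2, he1, z3, he2, _⟩ := hp2
  rcases (edge_base m hl vl).1 he1 with ⟨_, h1⟩
  rcases (edge_base m hl vl).1 he2 with ⟨_, h2⟩
  rcases h1 with ⟨rfl, i, j, hi, hj, _, rfl, rfl, rfl⟩ | ⟨rfl, i, j, hi, hj, _, rfl, rfl, rfl⟩
  · rcases h2 with ⟨rfl, i', j', hi', hj', _, rfl, heq, rfl⟩ | ⟨rfl, i', j', hi', hj', _, rfl, heq, rfl⟩
    · obtain ⟨h1, h2⟩ : i + 1 = i' ∧ j = j' := by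
        have := heq; simp [GV.v.injEq] at this; omega
      subst h1; subst h2
      exact hfHH i j (by omega) hj hmem
    · obtain ⟨h1, h2⟩ : i + 1 = i' ∧ j = j' := by
        have := heq; simp [GV.v.injEq] at this; omega
      subst h1; subst h2
      exact hfHV i j hi hj' hmem
  · rcases h2 with ⟨rfl, i', j', hi', hj', _, rfl, heq, rfl⟩ | ⟨rfl, i', j', hi', hj', _, rfl, heq, rfl⟩
    · obtain ⟨h1, h2⟩ : i = i' ∧ j + 1 = j' := by
        have := heq; simp [GV.v.injEq] at this; omega
      subst h1; subst h2
      exact hfVH i j hi' hj hmem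
    · obtain ⟨h1, h2⟩ : i = i' ∧ j + 1 = j' := by
        have := heq; simp [GV.v.injEq] at this; omega
      subst h1; subst h2
      exact hfVV i j hi (by omega) hmem

theorem no_ugly1 (col : Bool) (x y : GV) :
    ¬ langSat (Dgc m hl vl col) (Qugly1 S) x y := by
  rintro ⟨w, ⟨u, c, u', hu, hu', hc, ⟨ab, d, s, rfl⟩, rfl⟩, hp⟩
  obtain ⟨z, he, hp⟩ := hp
  obtain ⟨hcol, rfl, rfl⟩ := (edge_alpha m hl vl).1 he
  subst hcol
  have hcw : Sig.base ab d true s ∈ u ++ Sig.base ab d true s :: (u' ++ [Sig.omega]) := by simp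
  obtain ⟨p, q, hpq⟩ := pathSat_letter _ _ _ _ hp _ hcw
  exact absurd ((edge_base m hl vl).1 hpq).1 (by simp)

theorem no_ugly2 (col : Bool) (x y : GV) :
    ¬ langSat (Dgc m hl vl col) (Qugly2 S) x y := by
  rintro ⟨w, ⟨u, c, u', hu, hu', hc, ⟨ab, d, s, rfl⟩, rfl⟩, hp⟩
  obtain ⟨z, he, hp⟩ := hp
  obtain ⟨hcol, rfl, rfl⟩ := (edge_beta m hl vl).1 he
  subst hcol
  have hcw : Sig.base ab d false s ∈ u ++ Sig.base ab d false s :: (u' ++ [Sig.omega]) := by simp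
  obtain ⟨p, q, hpq⟩ := pathSat_letter _ _ _ _ hp _ hcw
  exact absurd ((edge_base m hl vl).1 hpq).1 (by simp)

include hhl hvl in
/-- The key lemma: green and red agree on every query of `𝒬`. -/
theorem key_agree (hb1 : vl 0 0 = 0) (hb2 : hl (m - 1) m = 0)
    (hfHH : ∀ i j, i + 1 < m → j ≤ m → ((false, hl i j), (false, hl (i + 1) j)) ∉ F)
    (hfHV : ∀ i j, i < m → j < m → ((false, hl i j), (true, vl (i + 1) j)) ∉ F)
    (hfVH : ∀ i j, i < m → j < m → ((true, vl i j), (false, hl i (j + 1))) ∉ F)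
    (hfVV : ∀ i j, i ≤ m → j + 1 < m → ((true, vl i j), (true, vl i (j + 1))) ∉ F) :
    ∀ L ∈ QQ S F, ∀ x y : GV,
      langSat (Dgc m hl vl true) L x y ↔ langSat (Dgc m hl vl false) L x y := by
  intro L hL x y
  rcases hL with (hL | hL) | hL
  · -- good
    simp only [Qgood, Set.mem_insert_iff, Set.mem_singleton_iff] at hL
    rcases hL with rfl | rfl | rfl | rfl | rfl | rfl | rfl | rfl
    · rw [sat_Q1, sat_Q1]
    · rw [sat_Q2, sat_Q2]
    · rw [sat_Q3 m hl vl hhl hvl, sat_Q3 m hl vl hhl hvl]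
    · rw [sat_Q4 m hl vl hhl hvl, sat_Q4 m hl vl hhl hvl]
    · exact Iff.trans (sat_single m hl vl hhl hvl true false true false x y)
        (sat_single m hl vl hhl hvl false false true false x y).symm
    · exact Iff.trans (sat_single m hl vl hhl hvl true false false true x y)
        (sat_single m hl vl hhl hvl false false false true x y).symm
    · exact Iff.trans (sat_single m hl vl hhl hvl true true true true x y)
        (sat_single m hl vl hhl hvl false true true true x y).symm
    · exact Iff.trans (sat_single m hl vl hhl hvl true true false false x y)
        (sat_single m hl vl hhl hvl false true false false x y).symm
  · -- bad
    rcases hL with (rfl | rfl) | ⟨p, hp, rfl⟩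
    · exact iff_of_false (no_bad1 m hl vl hb1 true x y) (no_bad1 m hl vl hb1 false x y)
    · exact iff_of_false (no_bad2 m hl vl hb2 true x y) (no_bad2 m hl vl hb2 false x y)
    · obtain ⟨⟨d, s⟩, ⟨d', s'⟩⟩ := p
      exact iff_of_false (no_badF m hl vl true hp hfHH hfHV hfVH hfVV x y)
        (no_badF m hl vl false hp hfHH hfHV hfVH hfVV x y)
  · -- ugly
    rcases hL with rfl | rfl
    · exact iff_of_false (no_ugly1 m hl vl true x y) (no_ugly1 m hl vl false x y)
    · exact iff_of_false (no_ugly2 m hl vl true x y) (no_ugly2 m hl vl false x y)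

/-- The staircase word. -/
def stairW (hl vl : ℕ → ℕ → ℕ) : ℕ → ℕ → List Sig
  | _, 0 => []
  | k, n + 1 => Sig.base true false false (hl k k) :: Sig.base false true false (vl (k + 1) k)
      :: stairW hl vl (k + 1) n

theorem stair_path : ∀ n k, k + n ≤ m →
    pathSat (Dgc m hl vl true) (GV.v k k) (stairW hl vl k n) (GV.v (k + n) (k + n)) := by
  intro n
  induction n with
  | zero => intro k _; rfl
  | succ n ih =>
    intro k hk
    refine ⟨GV.v (k + 1) k, ?_, GV.v (k + 1) (k + 1), ?_, ?_⟩
    · exact (edge_base m hl vl).2 ⟨rfl, Or.inl ⟨rfl, k, k, by omega, by omega,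
        (abOf_diag k).symm, rfl, rfl, rfl⟩⟩
    · refine (edge_base m hl vl).2 ⟨(by rfl), Or.inr ⟨rfl, k + 1, k, by omega, by omega, ?_,
        rfl, rfl, rfl⟩⟩
      simp [abOf_h, abOf_diag]
    · have h := ih (k + 1) (by omega)
      have e : k + 1 + n = k + (n + 1) := by omega
      rw [e] at h
      exact h

include hhl hvl in
theorem stair_mem : ∀ n k, k + n ≤ m → stairW hl vl k n ∈ KStar.kstar (startBlock S) := by
  intro n
  induction n with
  | zero => intro k _; exact Language.nil_mem_kstar _
  | succ n ih =>
    intro k hk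
    obtain ⟨Lb, hLb, hmem⟩ := Language.mem_kstar.1 (ih (k + 1) (by omega))
    refine Language.mem_kstar.2
      ⟨[Sig.base true false false (hl k k), Sig.base false true false (vl (k + 1) k)] :: Lb,
        ?_, ?_⟩
    · simp [stairW, hLb]
    · intro b hb
      rcases List.mem_cons.1 hb with rfl | hb
      · exact ⟨_, _, rfl, ⟨hl k k, hhl k k (by omega) (by omega), rfl⟩,
          ⟨vl (k + 1) k, hvl (k + 1) k (by omega) (by omega), rfl⟩⟩
      · exact hmem b hb

theorem red_Q0_empty (hb1 : vl 0 0 = 0) (hb2 : hl (m - 1) m = 0)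
    (hfHH : ∀ i j, i + 1 < m → j ≤ m → ((false, hl i j), (false, hl (i + 1) j)) ∉ F)
    (hfHV : ∀ i j, i < m → j < m → ((false, hl i j), (true, vl (i + 1) j)) ∉ F)
    (hfVH : ∀ i j, i < m → j < m → ((true, vl i j), (false, hl i (j + 1))) ∉ F)
    (hfVV : ∀ i j, i ≤ m → j + 1 < m → ((true, vl i j), (true, vl i (j + 1))) ∉ F)
    (x y : GV) : ¬ langSat (Dgc m hl vl false) (Q0L S F) x y := by
  rintro ⟨w, hw, hp⟩
  rcases hw with ((((hw | hw) | hw) | hw) | hw) | hw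
  · obtain ⟨u, _, _, rfl⟩ := hw
    obtain ⟨z, he, _⟩ := hp
    exact absurd ((edge_alpha m hl vl).1 he).1 (by simp)
  · exact no_bad1 m hl vl hb1 false x y ⟨w, hw, hp⟩
  · exact no_bad2 m hl vl hb2 false x y ⟨w, hw, hp⟩
  · obtain ⟨p, hpF, hw⟩ := hw
    obtain ⟨⟨d, s⟩, ⟨d', s'⟩⟩ := p
    exact no_badF m hl vl false hpF hfHH hfHV hfVH hfVV x y ⟨w, hw, hp⟩
  · exact no_ugly1 m hl vl false x y ⟨w, hw, hp⟩
  · exact no_ugly2 m hl vl false x y ⟨w, hw, hp⟩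

include hhl hvl in
theorem green_Q0 (hm : 1 ≤ m) :
    langSat (Dgc m hl vl true) (Q0L S F) GV.a GV.b := by
  refine ⟨Sig.alpha :: (stairW hl vl 0 m ++ [Sig.omega]), ?_, ?_⟩
  · refine Or.inl (Or.inl (Or.inl (Or.inl (Or.inl ?_))))
    refine ⟨stairW hl vl 0 m, stair_mem m hl vl hhl hvl m 0 (by omega), ?_, rfl⟩
    obtain ⟨n, rfl⟩ : ∃ n, m = n + 1 := ⟨m - 1, by omega⟩
    simp [stairW]
  · refine ⟨GV.v 0 0, (edge_alpha m hl vl).2 ⟨rfl, rfl, rfl⟩, ?_⟩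
    refine (pathSat_append' _ _ _ _ _).2 ⟨GV.v m m, ?_, ?_⟩
    · have h := stair_path m hl vl m 0 (by omega)
      simpa using h
    · exact ⟨GV.b, (edge_omega m hl vl).2 ⟨rfl, rfl⟩, rfl⟩

/-! ### Finite pullback -/

include hhl hvl in
theorem Dgc_alph (col : Bool) {p q : GV} {c : Sig} (h : Dgc m hl vl col p c q) :
    c ∈ SigAlph S := by
  rcases c with _ | _ | _ | ⟨ab, d, t, s⟩
  · exact Or.inl (by simp)
  · exact Or.inl (by simp)
  · exact Or.inl (by simp)
  · rcases (edge_base m hl vl).1 h with ⟨_, ⟨_, i, j, h1, h2, _, rfl, _, _⟩ |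
      ⟨_, i, j, h1, h2, _, rfl, _, _⟩⟩
    · exact Or.inr (hhl i j h1 h2)
    · exact Or.inr (hvl i j h1 h2)

/-- Finite vertex type. -/
abbrev FV (m : ℕ) := Option (Option (Fin (m + 1) × Fin (m + 1)))

def embGV (m : ℕ) : FV m → GV
  | none => GV.a
  | some none => GV.b
  | some (some (i, j)) => GV.v i j

theorem embGV_inj : Function.Injective (embGV m) := by
  rintro (_ | _ | ⟨i, j⟩) (_ | _ | ⟨i', j'⟩) h <;> simp [embGV] at h ⊢
  obtain ⟨h1, h2⟩ := h
  exact ⟨Fin.ext h1, Fin.ext h2⟩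

theorem Dgc_range (col : Bool) {p q : GV} {c : Sig} (h : Dgc m hl vl col p c q) :
    (∃ p', embGV m p' = p) ∧ (∃ q', embGV m q' = q) := by
  have hv : ∀ i j, i ≤ m → j ≤ m → ∃ p', embGV m p' = GV.v i j := by
    intro i j hi hj
    exact ⟨some (some (⟨i, by omega⟩, ⟨j, by omega⟩)), rfl⟩
  rcases c with _ | _ | _ | ⟨ab, d, t, s⟩
  · obtain ⟨_, rfl, rfl⟩ := (edge_alpha m hl vl).1 h
    exact ⟨⟨none, rfl⟩, hv 0 0 (by omega) (by omega)⟩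
  · obtain ⟨_, rfl, rfl⟩ := (edge_beta m hl vl).1 h
    exact ⟨⟨none, rfl⟩, hv 0 0 (by omega) (by omega)⟩
  · obtain ⟨rfl, rfl⟩ := (edge_omega m hl vl).1 h
    exact ⟨hv m m (by omega) (by omega), ⟨some none, rfl⟩⟩
  · rcases (edge_base m hl vl).1 h with ⟨_, ⟨_, i, j, h1, h2, _, _, rfl, rfl⟩ |
      ⟨_, i, j, h1, h2, _, _, rfl, rfl⟩⟩
    · exact ⟨hv i j (by omega) h2, hv (i + 1) j (by omega) h2⟩
    · exact ⟨hv i j h1 (by omega), hv i (j + 1) h1 (by omega)⟩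

/-- The pulled-back finite structure. -/
def pullD (m : ℕ) (hl vl : ℕ → ℕ → ℕ) (col : Bool) : DB (FV m) Sig :=
  fun p c q => Dgc m hl vl col (embGV m p) c (embGV m q)

theorem pull_fwd (col : Bool) : ∀ (w : List Sig) (x y : FV m),
    pathSat (pullD m hl vl col) x w y →
      pathSat (Dgc m hl vl col) (embGV m x) w (embGV m y) := by
  intro w
  induction w with
  | nil => intro x y h; exact congrArg (embGV m) h
  | cons c w ih =>
    rintro x y ⟨z, hz, hp⟩
    exact ⟨embGV m z, hz, ih z y hp⟩

theorem pull_bwd (col : Bool) : ∀ (w : List Sig) (x y : FV m),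
    pathSat (Dgc m hl vl col) (embGV m x) w (embGV m y) →
      pathSat (pullD m hl vl col) x w y := by
  intro w
  induction w with
  | nil => intro x y h; exact embGV_inj m h
  | cons c w ih =>
    rintro x y ⟨z, hz, hp⟩
    obtain ⟨z', rfl⟩ := (Dgc_range m hl vl col hz).2
    exact ⟨z', hz, ih z' y hp⟩

theorem langSat_pull (col : Bool) (L : Language Sig) (x y : FV m) :
    langSat (pullD m hl vl col) L x y ↔
      langSat (Dgc m hl vl col) L (embGV m x) (embGV m y) := by
  constructor
  · rintro ⟨w, hw, hp⟩; exact ⟨w, hw, pull_fwd m hl vl col w x y hp⟩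
  · rintro ⟨w, hw, hp⟩; exact ⟨w, hw, pull_bwd m hl vl col w x y hp⟩

end Grid

end Aux

/-- If the OGTP instance `⟨𝒮, ℱ⟩` has a solution grid of size `m × m`
(given by the shade labelings `hl`, `vl`), then the shaded grid structure
`M = Mstruct m hl vl` satisfies `M ⊨ 𝒬↔`, `M ⊨ (G(Q₀))(a,b)` and `M ⊭ (R(Q₀))(a,b)`; in
particular all requests generated by `𝒬_good` are already satisfied in `M`, and `𝒬`
does not finitely determine `Q₀`. -/
theorem solution_gives_counterexample (S : Finset ℕ) (F : Finset ((Bool × ℕ) × (Bool × ℕ)))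
    (hS : 0 ∈ S) (hF : FWf S F) (m : ℕ) (hm : 1 ≤ m) (hl vl : ℕ → ℕ → ℕ)
    (hhl : ∀ i j, i < m → j ≤ m → hl i j ∈ S)
    (hvl : ∀ i j, i ≤ m → j < m → vl i j ∈ S)
    (hb1 : vl 0 0 = 0) (hb2 : hl (m - 1) m = 0)
    (hfHH : ∀ i j, i + 1 < m → j ≤ m → ((false, hl i j), (false, hl (i + 1) j)) ∉ F)
    (hfHV : ∀ i j, i < m → j < m → ((false, hl i j), (true, vl (i + 1) j)) ∉ F)
    (hfVH : ∀ i j, i < m → j < m → ((true, vl i j), (false, hl i (j + 1))) ∉ F)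
    (hfVV : ∀ i j, i ≤ m → j + 1 < m → ((true, vl i j), (true, vl i (j + 1))) ∉ F) :
    satRCs (Mstruct m hl vl) (biRC (QQ S F)) ∧
    langSat (Mstruct m hl vl) (greenL (Q0L S F)) GV.a GV.b ∧
    ¬ langSat (Mstruct m hl vl) (redL (Q0L S F)) GV.a GV.b ∧
    rq (biRC (Qgood S)) (Mstruct m hl vl) = ∅ ∧
    ¬ FinDeterminesOn (SigAlph S) (QQ S F) (Q0L S F) := by
  have key := key_agree m hl vl hhl hvl hb1 hb2 hfHH hfHV hfVH hfVV (S := S) (F := F)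
  have hsat : satRCs (Mstruct m hl vl) (biRC (QQ S F)) := by
    intro t ht
    rcases ht with ⟨L, hL, rfl⟩ | ⟨L, hL, rfl⟩ <;> intro x y h
    · show langSat (Mstruct m hl vl) (redL L) x y
      rw [langSat_red]
      exact (key L hL x y).1 ((langSat_green m hl vl L x y).1 h)
    · show langSat (Mstruct m hl vl) (greenL L) x y
      rw [langSat_green]
      exact (key L hL x y).2 ((langSat_red m hl vl L x y).1 h)
  refine ⟨hsat, ?_, ?_, ?_, ?_⟩
  · rw [langSat_green]
    exact green_Q0 m hl vl hhl hvl hm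
  · rw [langSat_red]
    exact red_Q0_empty m hl vl hb1 hb2 hfHH hfHV hfVH hfVV GV.a GV.b
  · apply Set.eq_empty_iff_forall_notMem.2
    rintro ⟨x, y, t⟩ ⟨ht, h1, h2⟩
    have htQQ : t ∈ biRC (QQ S F) := by
      rcases ht with ⟨L, hL, rfl⟩ | ⟨L, hL, rfl⟩
      · exact Or.inl ⟨L, Or.inl (Or.inl hL), rfl⟩
      · exact Or.inr ⟨L, Or.inl (Or.inl hL), rfl⟩
    exact h2 (hsat t htQQ x y h1)
  · intro hdet
    have lab : ∀ col, labelsIn (pullD m hl vl col) (SigAlph S) := by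
      intro col x c y h
      exact Dgc_alph m hl vl hhl hvl col h
    have hagree : ∀ L ∈ QQ S F, qry L (pullD m hl vl true) = qry L (pullD m hl vl false) := by
      intro L hL
      ext ⟨x, y⟩
      simp only [qry, Set.mem_setOf_eq]
      rw [langSat_pull, langSat_pull]
      exact key L hL _ _
    have heq := hdet (FV m) inferInstance _ _ (lab true) (lab false) hagree
    have hg : (none, some none) ∈ qry (Q0L S F) (pullD m hl vl true) := by
      show langSat _ _ _ _
      rw [langSat_pull]
      exact green_Q0 m hl vl hhl hvl hm
    rw [heq] at hg
    have hred : langSat (Dgc m hl vl false) (Q0L S F) GV.a GV.b :=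
      (langSat_pull m hl vl false _ _ _).1 hg
    exact red_Q0_empty m hl vl hb1 hb2 hfHH hfHV hfVH hfVV GV.a GV.b hred
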